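/- Let r ≥ 2 be a non-square integer, α = √r, s = ⌊α⌋, β = α - s, and N(r) = #{1 ≤ j ≤ r-1 : {j/α} < β}, r = s² + t with 1 ≤ t ≤ 2s. Then N(r) = (s+1)(t-1) - 2·∑_{k=1}^{s} ⌊kβ⌋. -/

import Mathlib

open Real Finset

private lemma floor_neg_irr {y : ℝ} (hy : Irrational y) : ⌊-y⌋ = -⌊y⌋ - 1 := by
  have h1 : (⌊y⌋ : ℝ) < y := lt_of_le_of_ne (Int.floor_le y) (Ne.symm (hy.ne_int ⌊y⌋))
  have h2 : y < ⌊y⌋ + 1 := Int.lt_floor_add_one y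
  rw [Int.floor_eq_iff]
  constructor <;> push_cast <;> linarith

theorem stmt6 (r : ℕ) (hr : 2 ≤ r) (hns : ¬ IsSquare r)
    (s t : ℤ) (hs : s = ⌊Real.sqrt r⌋)
    (β : ℝ) (hβ : β = Real.sqrt r - s)
    (hrt : (r : ℤ) = s ^ 2 + t) (ht1 : 1 ≤ t) (ht2 : t ≤ 2 * s)
    (N : ℕ)
    (hN : N = ((Finset.Icc 1 (r - 1)).filter
      (fun j : ℕ => Int.fract ((j : ℝ) / Real.sqrt r) < β)).card) :
    (N : ℤ) = (s + 1) * (t - 1) - 2 * ∑ k ∈ Finset.Icc 1 s, ⌊(k : ℝ) * β⌋ := by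
  set α := Real.sqrt r with hαdef
  have hrpos : 0 < r := by omega
  have hr0 : (0:ℝ) < (r:ℝ) := by exact_mod_cast hrpos
  have hα0 : 0 < α := Real.sqrt_pos.mpr hr0
  have hα2 : α * α = (r:ℝ) := Real.mul_self_sqrt hr0.le
  have hirr : Irrational α := irrational_sqrt_natCast_iff.mpr hns
  have hr2 : (2:ℝ) ≤ (r:ℝ) := by exact_mod_cast hr
  have hα1 : 1 < α := by nlinarith
  have hs1 : 1 ≤ s := by rw [hs]; exact Int.le_floor.mpr (by exact_mod_cast hα1.le)
  have hαs : α = (s:ℝ) + β := by rw [hβ]; ring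
  have hβfract : β = Int.fract α := by rw [hβ, hs, Int.self_sub_floor]
  have hβ0 : 0 < β := by
    rw [hβfract]; exact Int.fract_pos.mpr (fun h => (hirr.ne_int ⌊α⌋) h)
  have hβ1 : β < 1 := hβfract ▸ Int.fract_lt_one α
  have hβirr : Irrational β := by rw [hβ]; exact hirr.sub_intCast s
  have hrtR : (r:ℝ) = (s:ℝ)^2 + (t:ℝ) := by exact_mod_cast hrt
  have hsα : (s:ℝ) < α := by rw [hαs]; linarith
  have hsβ : (s:ℝ) * β < (t:ℝ) := by
    have h1 : (s:ℝ) * β = (s:ℝ) * α - (s:ℝ)^2 := by rw [hβ]; ring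
    nlinarith
  have hsβfloor : ⌊(s:ℝ) * β⌋ ≤ t - 1 := by
    have := Int.floor_lt.mpr hsβ; omega
  have hfloorA : ∀ m : ℤ, ⌊(m:ℝ) * α⌋ = m * s + ⌊(m:ℝ) * β⌋ := by
    intro m
    have h : (m:ℝ) * α = ((m * s : ℤ) : ℝ) + (m:ℝ) * β := by rw [hαs]; push_cast; ring
    rw [h, Int.floor_intCast_add]
  set A : ℤ → ℤ := fun m => m * s + ⌊(m:ℝ) * β⌋ with hA
  set B : ℤ → ℤ := fun m => (r:ℤ) - (s - m) * s - ⌊((s - m : ℤ) : ℝ) * β⌋ - 1 with hB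
  have hfl_nonneg : ∀ m : ℤ, 0 ≤ m → 0 ≤ ⌊(m:ℝ) * β⌋ := by
    intro m hm
    exact Int.floor_nonneg.mpr (mul_nonneg (by exact_mod_cast hm) hβ0.le)
  have hsuper : ∀ m : ℤ, ⌊(m:ℝ) * β⌋ + ⌊((s - m : ℤ) : ℝ) * β⌋ ≤ ⌊(s:ℝ) * β⌋ := by
    intro m
    have h : (s:ℝ) * β = (m:ℝ) * β + ((s - m : ℤ) : ℝ) * β := by push_cast; ring
    rw [h]
    exact Int.le_floor.mpr (by push_cast; exact add_le_add (Int.floor_le _) (Int.floor_le _))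
  have hABdiff : ∀ m : ℤ, B m - A m = t - 1 - ⌊(m:ℝ) * β⌋ - ⌊((s - m : ℤ) : ℝ) * β⌋ := by
    intro m; simp only [hA, hB]; linear_combination hrt
  have hAB : ∀ m : ℤ, 0 ≤ m → m ≤ s → A m ≤ B m ∧ 0 ≤ A m ∧ B m ≤ (r:ℤ) - 1 := by
    intro m hm0 hms
    have h1 := hsuper m
    have h2 := hfl_nonneg m hm0
    have h3 := hfl_nonneg (s - m) (by omega)
    have h4 := hABdiff m
    have h5 : 0 ≤ m * s := mul_nonneg hm0 (by omega)
    have h6 : 0 ≤ (s - m) * s := mul_nonneg (by omega) (by omega)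
    refine ⟨by linarith, by simp only [hA]; linarith, by simp only [hB]; linarith⟩
  -- main characterization
  have hmain : ∀ m : ℤ, 0 ≤ m → m ≤ s → ∀ j : ℕ, 1 ≤ j →
      ((Int.fract ((j:ℝ) / α) < β ∧ ⌊(j:ℝ) / α⌋ = m) ↔ (A m < (j:ℤ) ∧ (j:ℤ) ≤ B m)) := by
    intro m hm0 hms j hj1
    have hj0 : (0:ℝ) < (j:ℝ) := by exact_mod_cast hj1
    have step1 : (Int.fract ((j:ℝ) / α) < β ∧ ⌊(j:ℝ) / α⌋ = m) ↔
        ((m:ℝ) ≤ (j:ℝ) / α ∧ (j:ℝ) / α < (m:ℝ) + β) := by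
      constructor
      · rintro ⟨h1, h2⟩
        have hle : ((m:ℤ):ℝ) ≤ (j:ℝ)/α := h2 ▸ Int.floor_le ((j:ℝ)/α)
        have hf : Int.fract ((j:ℝ)/α) = (j:ℝ)/α - (m:ℝ) := by
          rw [Int.fract, h2]
        exact ⟨hle, by linarith [hf ▸ h1]⟩
      · rintro ⟨h1, h2⟩
        have hfl : ⌊(j:ℝ)/α⌋ = m := by
          rw [Int.floor_eq_iff]
          exact ⟨h1, by push_cast; linarith⟩
        refine ⟨?_, hfl⟩
        rw [Int.fract, hfl]; linarith
    have hkey : ((m:ℝ) + β) * α = (r:ℝ) - ((s - m : ℤ) : ℝ) * α := by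
      rw [hβ]; push_cast; linear_combination hα2
    have step2l : ((m:ℝ) ≤ (j:ℝ) / α) ↔ ((m:ℝ) * α ≤ (j:ℝ)) := (le_div_iff₀ hα0)
    have step2r : ((j:ℝ) / α < (m:ℝ) + β) ↔ ((j:ℝ) < (r:ℝ) - ((s - m : ℤ) : ℝ) * α) := by
      rw [div_lt_iff₀ hα0, hkey]
    have step3l : ((m:ℝ) * α ≤ (j:ℝ)) ↔ A m < (j:ℤ) := by
      rcases eq_or_lt_of_le hm0 with h0 | h0
      · rw [← h0]
        simp only [hA, Int.cast_zero, zero_mul, zero_add, Int.floor_zero]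
        constructor
        · intro _; exact_mod_cast hj1
        · intro _; linarith
      · have hmne : m ≠ 0 := by omega
        have hirrm : Irrational ((m:ℝ) * α) := hirr.intCast_mul hmne
        have hAm : A m = ⌊(m:ℝ) * α⌋ := (hfloorA m).symm
        constructor
        · intro h
          have hne : (m:ℝ) * α ≠ ((j:ℤ):ℝ) := hirrm.ne_int (j:ℤ)
          have hlt : (m:ℝ) * α < ((j:ℤ):ℝ) := lt_of_le_of_ne (by push_cast; exact h) hne
          rw [hAm]; exact Int.floor_lt.mpr hlt
        · intro h
          have h1 : ((A m : ℤ):ℝ) + 1 ≤ ((j:ℤ):ℝ) := by exact_mod_cast h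
          have h2 : (m:ℝ) * α < (A m : ℝ) + 1 := by
            rw [hAm]; push_cast; exact Int.lt_floor_add_one _
          push_cast at h1 ⊢; linarith
    have step3r : ((j:ℝ) < (r:ℝ) - ((s - m : ℤ) : ℝ) * α) ↔ (j:ℤ) ≤ B m := by
      rcases eq_or_lt_of_le hms with hsm | hsm
      · rw [hsm]
        simp only [hB, sub_self, Int.cast_zero, zero_mul, sub_zero, Int.floor_zero]
        constructor
        · intro h
          have : (j:ℤ) < (r:ℤ) := by exact_mod_cast (by push_cast at h ⊢; linarith : ((j:ℤ):ℝ) < ((r:ℤ):ℝ))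
          omega
        · intro h
          have : ((j:ℤ):ℝ) ≤ ((r:ℤ):ℝ) - 1 := by exact_mod_cast h
          push_cast at this ⊢; linarith
      · have hkne : s - m ≠ 0 := by omega
        have hirrk : Irrational (((s - m : ℤ):ℝ) * α) := hirr.intCast_mul hkne
        have hirrx : Irrational ((r:ℝ) - ((s - m : ℤ):ℝ) * α) := by
          have h := hirrk.intCast_sub (r:ℤ)
          simpa using h
        have hfloorx : ⌊(r:ℝ) - ((s - m : ℤ):ℝ) * α⌋ = B m := by
          have heq : (r:ℝ) - ((s - m : ℤ):ℝ) * α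
              = (((r:ℤ) - (s - m) * s : ℤ):ℝ) + (-(((s - m : ℤ):ℝ) * β)) := by
            rw [hαs]; push_cast; ring
          rw [heq, Int.floor_intCast_add, floor_neg_irr (hβirr.intCast_mul hkne)]
          simp only [hB]; ring
        constructor
        · intro h
          rw [← hfloorx]
          exact Int.le_floor.mpr (by push_cast at h ⊢; linarith)
        · intro h
          have h1 : ((j:ℤ):ℝ) ≤ (B m : ℝ) := by exact_mod_cast h
          have h2 : (B m : ℝ) ≤ (r:ℝ) - ((s - m : ℤ):ℝ) * α := by
            rw [← hfloorx]; exact Int.floor_le _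
          have hne : ((j:ℤ):ℝ) ≠ (r:ℝ) - ((s - m : ℤ):ℝ) * α := fun he => hirrx.ne_int (j:ℤ) he.symm
          push_cast at h1 h2 hne ⊢
          exact lt_of_le_of_ne (by linarith) hne
    rw [step1, step2l, step2r, step3l, step3r]
  -- fiberwise decomposition
  have hmemb : ∀ j ∈ (Finset.Icc 1 (r - 1)).filter
      (fun j : ℕ => Int.fract ((j : ℝ) / α) < β),
      (fun j : ℕ => ⌊(j:ℝ) / α⌋) j ∈ Finset.Icc (0:ℤ) s := by
    intro j hj
    simp only [Finset.mem_filter, Finset.mem_Icc] at hj ⊢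
    obtain ⟨⟨hj1, hj2⟩, _⟩ := hj
    have hj0 : (0:ℝ) < (j:ℝ) := by exact_mod_cast hj1
    constructor
    · exact Int.floor_nonneg.mpr (by positivity)
    · have hjr : (j:ℝ) < (r:ℝ) := by exact_mod_cast (show j < r by omega)
      have hlt : (j:ℝ) / α < α := by rw [div_lt_iff₀ hα0]; nlinarith
      calc ⌊(j:ℝ)/α⌋ ≤ ⌊α⌋ := Int.floor_le_floor hlt.le
        _ = s := hs.symm
  have hcard := Finset.card_eq_sum_card_fiberwise hmemb
  have hfiber : ∀ m ∈ Finset.Icc (0:ℤ) s,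
      (((((Finset.Icc 1 (r - 1)).filter (fun j : ℕ => Int.fract ((j : ℝ) / α) < β)).filter
        (fun j : ℕ => ⌊(j:ℝ) / α⌋ = m)).card : ℤ)) = B m - A m := by
    intro m hm
    simp only [Finset.mem_Icc] at hm
    obtain ⟨hm0, hms⟩ := hm
    obtain ⟨hABle, hA0, hBr⟩ := hAB m hm0 hms
    have hset : ((Finset.Icc 1 (r - 1)).filter (fun j : ℕ => Int.fract ((j : ℝ) / α) < β)).filter
        (fun j : ℕ => ⌊(j:ℝ) / α⌋ = m) = Finset.Icc ((A m).toNat + 1) ((B m).toNat) := by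
      rw [Finset.filter_filter]
      ext j
      simp only [Finset.mem_filter, Finset.mem_Icc]
      constructor
      · rintro ⟨⟨hj1, hj2⟩, hc1, hc2⟩
        have h := (hmain m hm0 hms j hj1).mp ⟨hc1, hc2⟩
        omega
      · rintro ⟨h1, h2⟩
        have hj1 : 1 ≤ j := by omega
        have hZ : A m < (j:ℤ) ∧ (j:ℤ) ≤ B m := by omega
        obtain ⟨hc1, hc2⟩ := (hmain m hm0 hms j hj1).mpr hZ
        exact ⟨⟨hj1, by omega⟩, hc1, hc2⟩
    rw [hset, Nat.card_Icc]
    omega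
  rw [hN, hcard]
  push_cast
  rw [Finset.sum_congr rfl hfiber, Finset.sum_congr rfl (fun m _ => hABdiff m)]
  have hrefl : ∑ m ∈ Finset.Icc (0:ℤ) s, ⌊((s - m : ℤ) : ℝ) * β⌋
      = ∑ m ∈ Finset.Icc (0:ℤ) s, ⌊(m:ℝ) * β⌋ := by
    apply Finset.sum_nbij' (fun m => s - m) (fun m => s - m) <;>
      simp only [Finset.mem_Icc] <;> intros <;> first | omega | simp | rfl
  have hins : Finset.Icc (0:ℤ) s = insert 0 (Finset.Icc 1 s) := by
    ext x; simp only [Finset.mem_insert, Finset.mem_Icc]; omega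
  have hzero : ∑ m ∈ Finset.Icc (0:ℤ) s, ⌊(m:ℝ) * β⌋ = ∑ m ∈ Finset.Icc 1 s, ⌊(m:ℝ) * β⌋ := by
    rw [hins, Finset.sum_insert (by simp)]
    simp
  rw [Finset.sum_sub_distrib, Finset.sum_sub_distrib, hrefl, hzero, Finset.sum_const,
    Int.card_Icc]
  have hc : ((s + 1 - 0).toNat : ℤ) = s + 1 := by omega
  rw [nsmul_eq_mul, hc]
  ring
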